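/- Let F be a field of characteristic 2 and a, b ∈ F. Then there exists a field extension L of F of degree 1 or 3 and elements x, c ∈ L such that in W₂(L) one has (a,b) + (x^2,0) - (x,0) = (c, 0). -/
import Mathlib


universe u

open MvPolynomial WittVector Polynomial

theorem stmt5_wittAdd_one :
    wittAdd 2 1 = (X (0,1) + X (1,1) - X (0,0) * X (1,0) : MvPolynomial (Fin 2 × ℕ) ℤ) := by
  apply MvPolynomial.map_injective (Int.castRingHom ℚ) Int.cast_injective
  rw [show wittAdd 2 1 = wittStructureInt 2 (X 0 + X 1) 1 from rfl, map_wittStructureInt]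
  have hC : (MvPolynomial.C ((2:ℚ)^1) : MvPolynomial (Fin 2 × ℕ) ℚ) ≠ 0 := by simp
  apply mul_right_cancel₀ hC
  rw [show ((2:ℚ)^1) = ((2:ℕ):ℚ)^1 by norm_num]
  rw [wittStructureRat_rec_aux]
  simp only [wittStructureRat, Finset.range_one, Finset.sum_singleton, xInTermsOfW_zero,
    bind₁_X_right, wittPolynomial_one, wittPolynomial_zero, map_add, rename_X,
    map_sub, map_mul, map_pow, map_ofNat, MvPolynomial.map_C, MvPolynomial.map_X, rename_C, pow_one, pow_zero,
    MvPolynomial.C_1, one_mul]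
  rw [show ((2:ℕ):ℚ) = (2:ℚ) from by norm_num,
    show (MvPolynomial.C (2:ℚ) : MvPolynomial (Fin 2 × ℕ) ℚ) = 2 from map_ofNat MvPolynomial.C 2]
  ring

theorem stmt5_wittSub_one :
    wittSub 2 1 = (X (0,1) - X (1,1) + X (0,0) * X (1,0) - X (1,0)^2
      : MvPolynomial (Fin 2 × ℕ) ℤ) := by
  apply MvPolynomial.map_injective (Int.castRingHom ℚ) Int.cast_injective
  rw [show wittSub 2 1 = wittStructureInt 2 (X 0 - X 1) 1 from rfl, map_wittStructureInt]
  have hC : (MvPolynomial.C ((2:ℚ)^1) : MvPolynomial (Fin 2 × ℕ) ℚ) ≠ 0 := by simp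
  apply mul_right_cancel₀ hC
  rw [show ((2:ℚ)^1) = ((2:ℕ):ℚ)^1 by norm_num]
  rw [wittStructureRat_rec_aux]
  simp only [wittStructureRat, Finset.range_one, Finset.sum_singleton, xInTermsOfW_zero,
    bind₁_X_right, wittPolynomial_one, wittPolynomial_zero, map_add, rename_X,
    map_sub, map_mul, map_pow, map_ofNat, MvPolynomial.map_C, MvPolynomial.map_X, rename_C, pow_one, pow_zero,
    MvPolynomial.C_1, one_mul]
  rw [show ((2:ℕ):ℚ) = (2:ℚ) from by norm_num,
    show (MvPolynomial.C (2:ℚ) : MvPolynomial (Fin 2 × ℕ) ℚ) = 2 from map_ofNat MvPolynomial.C 2]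
  ring

theorem stmt5_add_coeff_one {R : Type*} [CommRing R] (u v : WittVector 2 R) :
    (u + v).coeff 1 = u.coeff 1 + v.coeff 1 - u.coeff 0 * v.coeff 0 := by
  rw [WittVector.add_coeff, stmt5_wittAdd_one]
  simp [peval, Function.uncurry]

theorem stmt5_sub_coeff_one {R : Type*} [CommRing R] (u v : WittVector 2 R) :
    (u - v).coeff 1 = u.coeff 1 - v.coeff 1 + u.coeff 0 * v.coeff 0 - v.coeff 0 ^ 2 := by
  rw [WittVector.sub_coeff, stmt5_wittSub_one]
  simp [peval, Function.uncurry]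

theorem stmt5_sub_coeff_zero {R : Type*} [CommRing R] (u v : WittVector 2 R) :
    (u - v).coeff 0 = u.coeff 0 - v.coeff 0 := by
  rw [WittVector.sub_coeff, wittSub_zero]
  simp [peval, Function.uncurry]

theorem stmt5_key {L : Type u} [Field L] [CharP L 2] (a b x : L)
    (h : x ^ 3 + a * x ^ 2 + x ^ 2 + a * x + b = 0) :
    TruncatedWittVector.mk 2 ![a, b] + TruncatedWittVector.mk 2 ![x ^ 2, 0] -
        TruncatedWittVector.mk 2 ![x, 0] =
      TruncatedWittVector.mk 2 ![a + x ^ 2 - x, 0] := by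
  have hmk : ∀ v : Fin 2 → L, TruncatedWittVector.mk 2 v =
      WittVector.truncate 2 ((TruncatedWittVector.mk 2 v).out) := fun v =>
    (TruncatedWittVector.truncateFun_out (TruncatedWittVector.mk 2 v)).symm
  have out_coeff : ∀ (v : Fin 2 → L) (i : Fin 2),
      ((TruncatedWittVector.mk 2 v).out).coeff i = v i := fun v i => by
    rw [TruncatedWittVector.coeff_out, TruncatedWittVector.coeff_mk]
  have hA0 : ((TruncatedWittVector.mk 2 ![a, b]).out).coeff 0 = a := out_coeff ![a, b] 0
  have hA1 : ((TruncatedWittVector.mk 2 ![a, b]).out).coeff 1 = b := out_coeff ![a, b] 1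
  have hB0 : ((TruncatedWittVector.mk 2 ![x ^ 2, 0]).out).coeff 0 = x ^ 2 :=
    out_coeff ![x ^ 2, 0] 0
  have hB1 : ((TruncatedWittVector.mk 2 ![x ^ 2, 0]).out).coeff 1 = 0 := out_coeff ![x ^ 2, 0] 1
  have hC0 : ((TruncatedWittVector.mk 2 ![x, 0]).out).coeff 0 = x := out_coeff ![x, 0] 0
  have hC1 : ((TruncatedWittVector.mk 2 ![x, 0]).out).coeff 1 = 0 := out_coeff ![x, 0] 1
  have hD0 : ((TruncatedWittVector.mk 2 ![a + x ^ 2 - x, 0]).out).coeff 0 = a + x ^ 2 - x :=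
    out_coeff ![a + x ^ 2 - x, 0] 0
  have hD1 : ((TruncatedWittVector.mk 2 ![a + x ^ 2 - x, 0]).out).coeff 1 = 0 :=
    out_coeff ![a + x ^ 2 - x, 0] 1
  rw [hmk ![a, b], hmk ![x ^ 2, 0], hmk ![x, 0], hmk ![a + x ^ 2 - x, 0], ← map_add, ← map_sub]
  ext i
  rw [WittVector.coeff_truncate, WittVector.coeff_truncate]
  have h2 : (2 : L) = 0 := by
    have := CharP.cast_eq_zero L 2
    simpa using this
  fin_cases i
  · simp only [Fin.val_zero]
    rw [stmt5_sub_coeff_zero, WittVector.add_coeff_zero, hA0, hB0, hC0, hD0]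
  · simp only [Fin.val_one]
    rw [stmt5_sub_coeff_one, stmt5_add_coeff_one, WittVector.add_coeff_zero,
      hA0, hA1, hB0, hB1, hC0, hC1, hD1]
    linear_combination h - (a * x ^ 2 + x ^ 2) * h2

theorem stmt5 {F : Type u} [Field F] [CharP F 2] (a b : F) :
    ∃ (L : Type u) (_ : Field L) (_ : Algebra F L),
      (Module.finrank F L = 1 ∨ Module.finrank F L = 3) ∧
      ∃ x c : L,
        TruncatedWittVector.mk 2 ![algebraMap F L a, algebraMap F L b] +
            TruncatedWittVector.mk 2 ![x ^ 2, 0] - TruncatedWittVector.mk 2 ![x, 0] =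
          TruncatedWittVector.mk 2 ![c, 0] := by
  by_cases hr : ∃ r : F, r ^ 3 + a * r ^ 2 + r ^ 2 + a * r + b = 0
  · obtain ⟨r, hr⟩ := hr
    refine ⟨F, inferInstance, inferInstance, Or.inl (Module.finrank_self F), r, a + r ^ 2 - r, ?_⟩
    simpa [Algebra.algebraMap_self] using stmt5_key a b r hr
  · set g : F[X] := Polynomial.X ^ 3 + Polynomial.C (a + 1) * Polynomial.X ^ 2 +
      Polynomial.C a * Polynomial.X + Polynomial.C b with hg
    have hm : g.Monic := by
      unfold g; monicity!
    have hdeg : g.natDegree = 3 := by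
      unfold g; compute_degree!
    have hroots : g.roots = 0 := by
      by_contra hne
      obtain ⟨r, hrm⟩ := Multiset.exists_mem_of_ne_zero hne
      rw [Polynomial.mem_roots hm.ne_zero] at hrm
      apply hr
      refine ⟨r, ?_⟩
      have := hrm
      simp only [Polynomial.IsRoot, hg, Polynomial.eval_add, Polynomial.eval_mul,
        Polynomial.eval_pow, Polynomial.eval_X, Polynomial.eval_C] at this
      linear_combination this
    have hirr : Irreducible g :=
      (hm.irreducible_iff_roots_eq_zero_of_degree_le_three (by omega) (by omega)).2 hroots
    haveI : Fact (Irreducible g) := ⟨hirr⟩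
    refine ⟨AdjoinRoot g, inferInstance, inferInstance, ?_, AdjoinRoot.root g,
      algebraMap F _ a + (AdjoinRoot.root g) ^ 2 - AdjoinRoot.root g, ?_⟩
    · right
      rw [(AdjoinRoot.powerBasis hm.ne_zero).finrank, AdjoinRoot.powerBasis_dim, hdeg]
    · haveI : CharP (AdjoinRoot g) 2 :=
        charP_of_injective_algebraMap (algebraMap F (AdjoinRoot g)).injective 2
      apply stmt5_key
      have h0 : (Polynomial.aeval (AdjoinRoot.root g)) g = 0 := by
        rw [AdjoinRoot.aeval_eq, AdjoinRoot.mk_self]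
      simp only [hg, map_add, map_mul, map_pow, Polynomial.aeval_X, Polynomial.aeval_C,
        map_one] at h0
      linear_combination h0
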